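/- Let γ be a reversible d×d rate matrix with stationary distribution π (π_iγ_{ij} = π_jγ_{ji}), with right eigenvectors u^{(ℓ)} and eigenvalues ν_ℓ (ℓ = 0,…,d−1, ν_0 = 0, u^{(0)} = 1) normalized by Σ_i π_i u_i^{(k)} u_i^{(ℓ)} = δ_{kℓ}. Set μ_i = π_i/(2|α|). Then μ_{ij} = (π_iπ_j/(2α²)) (1 + Σ_{ℓ=1}^{d−1} (|α|/(|α| − 2ν_ℓ)) u_i^{(ℓ)} u_j^{(ℓ)}) solves the system δ_{rs}μ_r − |α|μ_{rs} + Σ_i(γ_{ir}μ_{is} + γ_{is}μ_{ir}) = 0 for all r,s, assuming ν_ℓ < 0 for ℓ ≥ 1 and α < 0. -/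
import Mathlib


open Real

/-- Second moments of the quasi-stationary distribution for a reversible rate matrix `γ`
with spectral data `(ν_ℓ, u^{(ℓ)})`: the matrix
`μ_{ij} = (p_ip_j/(2α²))(1 + Σ_{ℓ≥1} (|α|/(|α|−2ν_ℓ)) u_i^{(ℓ)} u_j^{(ℓ)})` solves
`δ_{rs}μ_r − |α|μ_{rs} + Σ_i(γ_{ir}μ_{is} + γ_{is}μ_{ir}) = 0` with `μ_i = p_i/(2|α|)`. -/
theorem subcritical_second_moments_reversible (d : ℕ) [NeZero d] (α : ℝ) (hα : α < 0)
    (γ : Matrix (Fin d) (Fin d) ℝ) (p : Fin d → ℝ) (hpsum : ∑ i, p i = 1)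
    (hrev : ∀ i j, p i * γ i j = p j * γ j i)
    (u : Fin d → Fin d → ℝ) (ν : Fin d → ℝ)
    (hν0 : ν 0 = 0) (hu0 : ∀ i, u 0 i = 1) (hνneg : ∀ ℓ, ℓ ≠ 0 → ν ℓ < 0)
    (hnorm : ∀ k ℓ, ∑ i, p i * u k i * u ℓ i = if k = ℓ then 1 else 0)
    (hspec : ∀ i j, γ i j = p j * ∑ ℓ, ν ℓ * u ℓ i * u ℓ j)
    (μ : Fin d → ℝ) (hμ : ∀ i, μ i = p i / (2 * |α|))
    (μ2 : Fin d → Fin d → ℝ)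
    (hμ2 : ∀ i j, μ2 i j = p i * p j / (2 * α ^ 2) *
      (1 + ∑ ℓ ∈ Finset.univ.erase 0, |α| / (|α| - 2 * ν ℓ) * u ℓ i * u ℓ j)) :
    ∀ r s, (if r = s then μ r else 0) - |α| * μ2 r s +
      ∑ i, (γ i r * μ2 i s + γ i s * μ2 i r) = 0 := by
  have hαne : α ≠ 0 := ne_of_lt hα
  have hA : (0:ℝ) < |α| := abs_pos.mpr hαne
  have hAne : |α| ≠ 0 := ne_of_gt hA
  have hden : ∀ ℓ : Fin d, ℓ ≠ 0 → |α| - 2 * ν ℓ ≠ 0 := by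
    intro ℓ hℓ; have := hνneg ℓ hℓ; nlinarith
  -- orthogonality against the constant eigenvector
  have horth1 : ∀ ℓ : Fin d, (∑ i, p i * u ℓ i) = if (0:Fin d) = ℓ then 1 else 0 := by
    intro ℓ
    have h := hnorm 0 ℓ
    simp only [hu0, mul_one] at h
    exact h
  -- completeness
  have hUB : (Matrix.of u) * (Matrix.of fun i ℓ => p i * u ℓ i) = 1 := by
    ext k ℓ
    simp only [Matrix.mul_apply, Matrix.of_apply, Matrix.one_apply]
    rw [← hnorm k ℓ]
    exact Finset.sum_congr rfl fun i _ => by ring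
  have hBU := mul_eq_one_comm.mp hUB
  have hcomp : ∀ a b : Fin d, p a * ∑ ℓ, u ℓ a * u ℓ b = if a = b then 1 else 0 := by
    intro a b
    have h := congrFun (congrFun hBU a) b
    simp only [Matrix.mul_apply, Matrix.of_apply, Matrix.one_apply] at h
    rw [← h, Finset.mul_sum]
    exact Finset.sum_congr rfl fun ℓ _ => by ring
  -- inner orthogonality computation
  have hinner : ∀ (t : Fin d) (ℓ : Fin d),
      (∑ i, p i * u ℓ i *
        (1 + ∑ m ∈ Finset.univ.erase 0, |α| / (|α| - 2 * ν m) * u m i * u m t))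
      = (if (0:Fin d) = ℓ then 1 else 0)
        + (if ℓ ∈ Finset.univ.erase 0 then |α| / (|α| - 2 * ν ℓ) * u ℓ t else 0) := by
    intro t ℓ
    have expand : ∀ i : Fin d, p i * u ℓ i *
        (1 + ∑ m ∈ Finset.univ.erase 0, |α| / (|α| - 2 * ν m) * u m i * u m t)
        = p i * u ℓ i + ∑ m ∈ Finset.univ.erase 0,
            (|α| / (|α| - 2 * ν m) * u m t) * (p i * u ℓ i * u m i) := by
      intro i
      rw [mul_add, mul_one, Finset.mul_sum]
      congr 1
      exact Finset.sum_congr rfl fun m _ => by ring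
    rw [Finset.sum_congr rfl fun i _ => expand i, Finset.sum_add_distrib, horth1 ℓ]
    congr 1
    rw [Finset.sum_comm]
    have : ∀ m ∈ Finset.univ.erase (0 : Fin d),
        (∑ i, (|α| / (|α| - 2 * ν m) * u m t) * (p i * u ℓ i * u m i))
        = if ℓ = m then |α| / (|α| - 2 * ν m) * u m t else 0 := by
      intro m _
      rw [← Finset.mul_sum, hnorm ℓ m]
      split <;> simp
    rw [Finset.sum_congr rfl this, Finset.sum_ite_eq]
  -- the key sum
  have hT : ∀ r s : Fin d, (∑ i, γ i r * μ2 i s) =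
      p r * p s / (2 * α ^ 2) *
        ∑ ℓ ∈ Finset.univ.erase 0,
          ν ℓ * (|α| / (|α| - 2 * ν ℓ)) * u ℓ r * u ℓ s := by
    intro r s
    have hstep : ∀ i : Fin d, γ i r * μ2 i s =
        ∑ ℓ, (p r * p s / (2 * α ^ 2) * (ν ℓ * u ℓ r)) *
          (p i * u ℓ i *
            (1 + ∑ m ∈ Finset.univ.erase 0, |α| / (|α| - 2 * ν m) * u m i * u m s)) := by
      intro i
      rw [hspec i r, hμ2 i s, mul_assoc, Finset.sum_mul, Finset.mul_sum]
      exact Finset.sum_congr rfl fun ℓ _ => by ring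
    rw [Finset.sum_congr rfl fun i _ => hstep i, Finset.sum_comm]
    have hfac : ∀ ℓ : Fin d,
        (∑ i, (p r * p s / (2 * α ^ 2) * (ν ℓ * u ℓ r)) *
          (p i * u ℓ i *
            (1 + ∑ m ∈ Finset.univ.erase 0, |α| / (|α| - 2 * ν m) * u m i * u m s)))
        = (p r * p s / (2 * α ^ 2) * (ν ℓ * u ℓ r)) *
          ((if (0:Fin d) = ℓ then 1 else 0)
            + (if ℓ ∈ Finset.univ.erase 0 then |α| / (|α| - 2 * ν ℓ) * u ℓ s else 0)) := by
      intro ℓ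
      rw [← Finset.mul_sum, hinner s ℓ]
    rw [Finset.sum_congr rfl fun ℓ _ => hfac ℓ]
    simp only [mul_add, Finset.sum_add_distrib, mul_ite, mul_one, mul_zero]
    rw [Finset.sum_ite_eq, Finset.sum_ite_mem, Finset.univ_inter]
    simp only [Finset.mem_univ, if_true, hν0, mul_zero, zero_mul, zero_add]
    rw [Finset.mul_sum]
    exact Finset.sum_congr rfl fun ℓ _ => by ring
  intro r s
  rw [Finset.sum_add_distrib, hT r s, hT s r, hμ2 r s, hμ r]
  set E := ∑ ℓ ∈ Finset.univ.erase 0, |α| / (|α| - 2 * ν ℓ) * u ℓ r * u ℓ s with hE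
  set F := ∑ ℓ ∈ Finset.univ.erase 0,
      ν ℓ * (|α| / (|α| - 2 * ν ℓ)) * u ℓ r * u ℓ s with hF
  set G := ∑ ℓ ∈ Finset.univ.erase 0, u ℓ r * u ℓ s with hG
  have hFs : (∑ ℓ ∈ Finset.univ.erase 0,
      ν ℓ * (|α| / (|α| - 2 * ν ℓ)) * u ℓ s * u ℓ r) = F := by
    rw [hF]; exact Finset.sum_congr rfl fun ℓ _ => by ring
  rw [hFs]
  have h2F : 2 * F = |α| * E - |α| * G := by
    rw [hE, hF, hG, Finset.mul_sum, Finset.mul_sum, Finset.mul_sum,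
      ← Finset.sum_sub_distrib]
    refine Finset.sum_congr rfl fun ℓ hℓ => ?_
    have hd := hden ℓ (Finset.ne_of_mem_erase hℓ)
    field_simp
    ring
  have hGδ : p s * (1 + G) = if s = r then 1 else 0 := by
    have h := hcomp s r
    rw [← Finset.add_sum_erase _ _ (Finset.mem_univ (0 : Fin d)), hu0, hu0, one_mul] at h
    rw [show (∑ ℓ ∈ Finset.univ.erase 0, u ℓ s * u ℓ r) = G from
      Finset.sum_congr rfl fun ℓ _ => mul_comm _ _] at h
    exact h
  have hα2 : α ^ 2 = |α| ^ 2 := (sq_abs α).symm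
  rw [hα2]
  set a := |α| with ha
  rcases eq_or_ne r s with h | h
  · subst h
    rw [if_pos rfl]
    have hp : p r * (1 + G) = 1 := by simpa using hGδ
    linear_combination (norm := (field_simp; ring))
      (p r * p r / (2 * a ^ 2)) * h2F - (p r / (2 * a)) * hp
  · rw [if_neg h]
    have hp : p s * (1 + G) = 0 := by rw [hGδ, if_neg (Ne.symm h)]
    linear_combination (norm := (field_simp; ring))
      (p r * p s / (2 * a ^ 2)) * h2F - (p r / (2 * a)) * hp
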